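/- Suppose α ∈ ℝ² satisfies |⟨α, k⟩| ≥ c/|k|^{7} for all nonzero k ∈ ℤ², for some c > 0 (as holds for α = (1,π) by Salikhov's irrationality measure for π). Then there exists c' > 0 such that for all mean-zero f ∈ H¹(𝕋²): ‖∇f‖_{L²}^{7/8}·‖⟨∇f, α⟩‖_{L²}^{1/8} ≥ c'·‖f‖_{L²}. -/

import Mathlib

open Real

/- We model a mean-zero function `f ∈ H¹(𝕋²)` on the flat torus `𝕋² = ℝ²/(2πℤ)²`
by its Fourier coefficients `a : ℤ × ℤ → ℂ`, `f = Σ aₖ e^{ik·x}`, `a₀ = 0`.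
By Parseval, `‖f‖²_{L²} = (2π)² Σ |aₖ|²`, `‖∇f‖²_{L²} = (2π)² Σ |k|²|aₖ|²` and
`‖⟨∇f,α⟩‖²_{L²} = (2π)² Σ ⟨k,α⟩²|aₖ|²`.  All inequalities below are homogeneous
in the number of `L²`-norm factors, so the constant `(2π)²` is harmlessly dropped. -/

/-- `‖f‖²_{L²(𝕋²)}` (modulo the factor `(2π)²`). -/
noncomputable def normSq (a : ℤ × ℤ → ℂ) : ℝ := ∑' k : ℤ × ℤ, ‖a k‖ ^ 2

/-- `‖∇f‖²_{L²(𝕋²)}` (modulo the factor `(2π)²`). -/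
noncomputable def gradSq (a : ℤ × ℤ → ℂ) : ℝ :=
  ∑' k : ℤ × ℤ, (((k.1 : ℝ)) ^ 2 + ((k.2 : ℝ)) ^ 2) * ‖a k‖ ^ 2

/-- `‖⟨∇f, α⟩‖²_{L²(𝕋²)}` (modulo the factor `(2π)²`). -/
noncomputable def dirSq (α : ℝ × ℝ) (a : ℤ × ℤ → ℂ) : ℝ :=
  ∑' k : ℤ × ℤ, (α.1 * k.1 + α.2 * k.2) ^ 2 * ‖a k‖ ^ 2

/-- `f ∈ H¹(𝕋²)`. -/
def IsH1 (a : ℤ × ℤ → ℂ) : Prop :=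
  Summable (fun k : ℤ × ℤ => ‖a k‖ ^ 2) ∧
  Summable (fun k : ℤ × ℤ => (((k.1 : ℝ)) ^ 2 + ((k.2 : ℝ)) ^ 2) * ‖a k‖ ^ 2)

/-- If `|⟨α,k⟩| ≥ c/|k|⁷` for all nonzero `k ∈ ℤ²` (as for `α = (1,π)` by Salikhov),
then `‖∇f‖^{7/8} ⬝ ‖⟨∇f,α⟩‖^{1/8} ≥ c' ‖f‖` for all mean-zero `f ∈ H¹(𝕋²)`. -/
theorem stmt_14 (α₁ α₂ : ℝ) (c : ℝ) (hc : 0 < c)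
    (hα : ∀ k₁ k₂ : ℤ, ¬ (k₁ = 0 ∧ k₂ = 0) →
      |α₁ * k₁ + α₂ * k₂| ≥ c / Real.sqrt ((k₁ : ℝ) ^ 2 + (k₂ : ℝ) ^ 2) ^ 7) :
    ∃ c' > (0 : ℝ), ∀ a : ℤ × ℤ → ℂ, IsH1 a → a 0 = 0 →
      Real.sqrt (gradSq a) ^ ((7 : ℝ) / 8) *
          Real.sqrt (dirSq (α₁, α₂) a) ^ ((1 : ℝ) / 8)
        ≥ c' * Real.sqrt (normSq a) := by
  refine ⟨c ^ ((1:ℝ)/8), Real.rpow_pos_of_pos hc _, fun a ⟨hN, hG⟩ ha0 => ?_⟩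
  set x : ℤ × ℤ → ℝ := fun k => (((k.1 : ℝ)) ^ 2 + ((k.2 : ℝ)) ^ 2) * ‖a k‖ ^ 2 with hxdef
  set y : ℤ × ℤ → ℝ := fun k => (α₁ * k.1 + α₂ * k.2) ^ 2 * ‖a k‖ ^ 2 with hydef
  have hxnn : ∀ k, 0 ≤ x k := fun k => by positivity
  have hynn : ∀ k, 0 ≤ y k := fun k => by positivity
  -- summability of the directional-derivative weights
  have hy : Summable y := by
    refine Summable.of_nonneg_of_le hynn (fun k => ?_) (hG.mul_left (α₁ ^ 2 + α₂ ^ 2))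
    have h1 : (α₁ * k.1 + α₂ * k.2) ^ 2 ≤
        (α₁ ^ 2 + α₂ ^ 2) * (((k.1 : ℝ)) ^ 2 + ((k.2 : ℝ)) ^ 2) := by
      nlinarith [sq_nonneg (α₁ * (k.2 : ℝ) - α₂ * (k.1 : ℝ))]
    have h2 : (0:ℝ) ≤ ‖a k‖ ^ 2 := by positivity
    calc y k = (α₁ * k.1 + α₂ * k.2) ^ 2 * ‖a k‖ ^ 2 := rfl
      _ ≤ ((α₁ ^ 2 + α₂ ^ 2) * (((k.1 : ℝ)) ^ 2 + ((k.2 : ℝ)) ^ 2)) * ‖a k‖ ^ 2 :=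
          mul_le_mul_of_nonneg_right h1 h2
      _ = (α₁ ^ 2 + α₂ ^ 2) * ((((k.1 : ℝ)) ^ 2 + ((k.2 : ℝ)) ^ 2) * ‖a k‖ ^ 2) := by ring
  have hpq : Real.HolderConjugate (8/7) 8 := ⟨by norm_num, by norm_num, by norm_num⟩
  set f : ℤ × ℤ → ℝ := fun k => x k ^ ((7:ℝ)/8) with hfdef
  set g : ℤ × ℤ → ℝ := fun k => y k ^ ((1:ℝ)/8) with hgdef
  have hfp : ∀ k, f k ^ ((8:ℝ)/7) = x k := fun k => by
    rw [hfdef, ← Real.rpow_mul (hxnn k)]; norm_num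
  have hgq : ∀ k, g k ^ (8:ℝ) = y k := fun k => by
    rw [hgdef, ← Real.rpow_mul (hynn k)]; norm_num
  have hfsum : Summable (fun k => f k ^ ((8:ℝ)/7)) := by simpa only [hfp] using hG
  have hgsum : Summable (fun k => g k ^ (8:ℝ)) := by simpa only [hgq] using hy
  obtain ⟨hfg_sum, hfg_le⟩ :=
    summable_and_inner_le_Lp_mul_Lq_tsum_of_nonneg hpq
      (f := f) (g := g) (fun k => by positivity) (fun k => by positivity) hfsum hgsum
  -- pointwise lower bound
  have hpoint : ∀ k : ℤ × ℤ, c ^ ((1:ℝ)/4) * ‖a k‖ ^ 2 ≤ f k * g k := by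
    intro k
    by_cases hk : k = 0
    · subst hk
      simp [hfdef, hgdef, hxdef, hydef, ha0,
        Real.zero_rpow (by norm_num : ((7:ℝ)/8) ≠ 0),
        Real.zero_rpow (by norm_num : ((1:ℝ)/8) ≠ 0)]
    · set s : ℝ := ((k.1 : ℝ)) ^ 2 + ((k.2 : ℝ)) ^ 2 with hsdef
      set t : ℝ := (α₁ * k.1 + α₂ * k.2) ^ 2 with htdef
      set n : ℝ := ‖a k‖ ^ 2 with hndef
      have hnnn : (0:ℝ) ≤ n := by positivity
      have hk' : ¬ (k.1 = 0 ∧ k.2 = 0) := by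
        intro ⟨h1, h2⟩; exact hk (Prod.ext h1 h2)
      have hs : (0:ℝ) < s := by
        rcases not_and_or.mp hk' with h | h
        · have h0 : ((k.1 : ℝ)) ≠ 0 := Int.cast_ne_zero.mpr h
          have : (0:ℝ) < ((k.1:ℝ))^2 := lt_of_le_of_ne (sq_nonneg _) (Ne.symm (pow_ne_zero 2 h0))
          nlinarith [sq_nonneg ((k.2:ℝ))]
        · have h0 : ((k.2 : ℝ)) ≠ 0 := Int.cast_ne_zero.mpr h
          have : (0:ℝ) < ((k.2:ℝ))^2 := lt_of_le_of_ne (sq_nonneg _) (Ne.symm (pow_ne_zero 2 h0))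
          nlinarith [sq_nonneg ((k.1:ℝ))]
      have hsq : Real.sqrt s > 0 := Real.sqrt_pos.mpr hs
      have hα' := hα k.1 k.2 hk'
      have ht : c ^ 2 / s ^ 7 ≤ t := by
        have h1 : c / Real.sqrt s ^ 7 ≤ |α₁ * k.1 + α₂ * k.2| := hα'
        have h2 := pow_le_pow_left₀ (by positivity) h1 2
        have h3 : (c / Real.sqrt s ^ 7) ^ 2 = c ^ 2 / s ^ 7 := by
          rw [div_pow, ← pow_mul, show 7 * 2 = 2 * 7 by ring, pow_mul, Real.sq_sqrt hs.le]
        rw [h3, sq_abs] at h2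
        exact h2
      -- key scalar bound
      have hkey : c ^ ((1:ℝ)/4) ≤ s ^ ((7:ℝ)/8) * t ^ ((1:ℝ)/8) := by
        have h1 : (c ^ 2 / s ^ 7) ^ ((1:ℝ)/8) ≤ t ^ ((1:ℝ)/8) :=
          Real.rpow_le_rpow (by positivity) ht (by norm_num)
        have h2 : (c ^ 2 / s ^ 7) ^ ((1:ℝ)/8) = c ^ ((1:ℝ)/4) / s ^ ((7:ℝ)/8) := by
          rw [Real.div_rpow (by positivity) (by positivity),
            ← Real.rpow_natCast c 2, ← Real.rpow_natCast s 7,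
            ← Real.rpow_mul hc.le, ← Real.rpow_mul hs.le]
          norm_num
        have hspos : (0:ℝ) < s ^ ((7:ℝ)/8) := Real.rpow_pos_of_pos hs _
        calc c ^ ((1:ℝ)/4) = s ^ ((7:ℝ)/8) * (c ^ ((1:ℝ)/4) / s ^ ((7:ℝ)/8)) := by
              field_simp
          _ ≤ s ^ ((7:ℝ)/8) * t ^ ((1:ℝ)/8) := by
              rw [← h2]; exact mul_le_mul_of_nonneg_left h1 hspos.le
      have hfg : f k * g k = (s ^ ((7:ℝ)/8) * t ^ ((1:ℝ)/8)) * n := by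
        have : f k * g k = s ^ ((7:ℝ)/8) * n ^ ((7:ℝ)/8) * (t ^ ((1:ℝ)/8) * n ^ ((1:ℝ)/8)) := by
          rw [hfdef, hgdef]
          simp only [hxdef, hydef]
          rw [Real.mul_rpow (by positivity) hnnn, Real.mul_rpow (by positivity) hnnn]
        rw [this]
        have hn8 : n ^ ((7:ℝ)/8) * n ^ ((1:ℝ)/8) = n := by
          rw [← Real.rpow_add' hnnn (by norm_num)]
          norm_num
        calc s ^ ((7:ℝ)/8) * n ^ ((7:ℝ)/8) * (t ^ ((1:ℝ)/8) * n ^ ((1:ℝ)/8))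
            = (s ^ ((7:ℝ)/8) * t ^ ((1:ℝ)/8)) * (n ^ ((7:ℝ)/8) * n ^ ((1:ℝ)/8)) := by ring
          _ = (s ^ ((7:ℝ)/8) * t ^ ((1:ℝ)/8)) * n := by rw [hn8]
      rw [hfg]
      exact mul_le_mul_of_nonneg_right hkey hnnn
  -- sum up
  have hmain : c ^ ((1:ℝ)/4) * normSq a ≤
      gradSq a ^ ((7:ℝ)/8) * dirSq (α₁, α₂) a ^ ((1:ℝ)/8) := by
    have h1 : c ^ ((1:ℝ)/4) * normSq a = ∑' k, c ^ ((1:ℝ)/4) * ‖a k‖ ^ 2 := by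
      rw [normSq, tsum_mul_left]
    have h2 : (∑' k, c ^ ((1:ℝ)/4) * ‖a k‖ ^ 2) ≤ ∑' k, f k * g k :=
      Summable.tsum_le_tsum hpoint (hN.mul_left _) hfg_sum
    have h3 : (∑' k, f k ^ ((8:ℝ)/7)) = gradSq a := tsum_congr hfp
    have h4 : (∑' k, g k ^ (8:ℝ)) = dirSq (α₁, α₂) a := tsum_congr hgq
    have h5 := hfg_le
    rw [h3, h4] at h5
    have h6 : (1:ℝ) / (8/7) = 7/8 := by norm_num
    rw [h6] at h5
    calc c ^ ((1:ℝ)/4) * normSq a = ∑' k, c ^ ((1:ℝ)/4) * ‖a k‖ ^ 2 := h1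
      _ ≤ ∑' k, f k * g k := h2
      _ ≤ gradSq a ^ ((7:ℝ)/8) * dirSq (α₁, α₂) a ^ ((1:ℝ)/8) := by
          convert h5 using 3 <;> norm_num
  -- take square roots
  have hGnn : 0 ≤ gradSq a := tsum_nonneg hxnn
  have hDnn : 0 ≤ dirSq (α₁, α₂) a := tsum_nonneg hynn
  have hNnn : 0 ≤ normSq a := tsum_nonneg (fun k => by positivity)
  have h := Real.rpow_le_rpow (by positivity) hmain (by norm_num : (0:ℝ) ≤ 1/2)
  rw [Real.mul_rpow (by positivity) hNnn, Real.mul_rpow (by positivity) (by positivity),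
    ← Real.rpow_mul hc.le, ← Real.rpow_mul hGnn, ← Real.rpow_mul hDnn] at h
  rw [ge_iff_le, Real.sqrt_eq_rpow, Real.sqrt_eq_rpow, Real.sqrt_eq_rpow,
    ← Real.rpow_mul hGnn, ← Real.rpow_mul hDnn]
  calc c ^ ((1:ℝ)/8) * normSq a ^ ((1:ℝ)/2)
      = c ^ ((1:ℝ)/4 * (1/2)) * normSq a ^ ((1:ℝ)/2) := by norm_num
    _ ≤ gradSq a ^ ((7:ℝ)/8 * (1/2)) * dirSq (α₁, α₂) a ^ ((1:ℝ)/8 * (1/2)) := by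
        convert h using 3 <;> norm_num
    _ = gradSq a ^ ((1:ℝ)/2 * (7/8)) * dirSq (α₁, α₂) a ^ ((1:ℝ)/2 * (1/8)) := by norm_num
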